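/- Let ρ ∈ [0,1), let u > 0, and let S ⊂ ℝ be a bounded open set with Lebesgue measure |S| < ∞; set d(u,S) := inf_{s ∈ S} |u + s|. Then the integral of the bivariate Gaussian density f_ρ(x,y) = (2π√(1−ρ²))^{-1} · exp(−(x² − 2ρxy + y²)/(2(1−ρ²))) over the set (u+S) × (u+S) is at most (|S|² / (2π√(1−ρ²))) · exp(−d(u,S)²/(1+ρ)). -/

import Mathlib

open MeasureTheory Real

/-- Gaussian double-integral bound: for `ρ ∈ [0,1)`, `u > 0` and a bounded open set
`S ⊆ ℝ`, the integral of the standardized bivariate Gaussian density with correlation `ρ`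
over `(u+S) × (u+S)` is at most `(|S|²/(2π√(1−ρ²))) · exp(−d(u,S)²/(1+ρ))`,
where `d(u,S) = dist(−u, S) = inf_{s ∈ S} |u+s|`. -/
theorem stmt_0 (ρ u : ℝ) (hρ0 : 0 ≤ ρ) (hρ1 : ρ < 1) (hu : 0 < u)
    (S : Set ℝ) (hSopen : IsOpen S) (hSbdd : Bornology.IsBounded S) :
    (∫ p in ((fun s => u + s) '' S) ×ˢ ((fun s => u + s) '' S),
        (2 * π * Real.sqrt (1 - ρ ^ 2))⁻¹ *
          Real.exp (-(p.1 ^ 2 - 2 * ρ * p.1 * p.2 + p.2 ^ 2) / (2 * (1 - ρ ^ 2)))) ≤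
      (volume S).toReal ^ 2 / (2 * π * Real.sqrt (1 - ρ ^ 2)) *
        Real.exp (-(Metric.infDist (-u) S) ^ 2 / (1 + ρ)) := by
  set d := Metric.infDist (-u) S with hd
  have hd0 : 0 ≤ d := Metric.infDist_nonneg
  set A := (fun s => u + s) '' S with hA
  set T := A ×ˢ A with hT
  have hsq : 0 < Real.sqrt (1 - ρ ^ 2) := by
    apply Real.sqrt_pos.mpr
    nlinarith
  have hc : 0 < 2 * π * Real.sqrt (1 - ρ ^ 2) := by positivity
  set C := (2 * π * Real.sqrt (1 - ρ ^ 2))⁻¹ * Real.exp (-d ^ 2 / (1 + ρ)) with hC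
  -- volume of A equals volume of S
  have hvolA : volume A = volume S := by
    have : A = (u + ·) '' S := rfl
    rw [this, Set.image_add_left]
    simp [measure_preimage_add]
  have hvolS : volume S < ⊤ := hSbdd.measure_lt_top
  have hvolT : volume T = volume S * volume S := by
    rw [hT, ← hvolA]
    rw [show (volume : Measure (ℝ × ℝ)) = (volume : Measure ℝ).prod volume from
      Measure.volume_eq_prod ℝ ℝ, Measure.prod_prod]
  have hvolTlt : volume T < ⊤ := by
    rw [hvolT]; exact ENNReal.mul_lt_top hvolS hvolS
  -- pointwise bound
  have hbound : ∀ p ∈ T, ‖(2 * π * Real.sqrt (1 - ρ ^ 2))⁻¹ *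
      Real.exp (-(p.1 ^ 2 - 2 * ρ * p.1 * p.2 + p.2 ^ 2) / (2 * (1 - ρ ^ 2)))‖ ≤ C := by
    rintro ⟨x, y⟩ ⟨hx, hy⟩
    have hdx : d ≤ |x| := by
      obtain ⟨s, hs, rfl⟩ := hx
      have := Metric.infDist_le_dist_of_mem (x := -u) hs
      rw [Real.dist_eq] at this
      calc d ≤ |-u - s| := this
        _ = |u + s| := by rw [abs_sub_comm]; ring_nf
    have hdy : d ≤ |y| := by
      obtain ⟨s, hs, rfl⟩ := hy
      have := Metric.infDist_le_dist_of_mem (x := -u) hs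
      rw [Real.dist_eq] at this
      calc d ≤ |-u - s| := this
        _ = |u + s| := by rw [abs_sub_comm]; ring_nf
    have hx2 : d ^ 2 ≤ x ^ 2 := by
      calc d ^ 2 ≤ |x| ^ 2 := by nlinarith
        _ = x ^ 2 := sq_abs x
    have hy2 : d ^ 2 ≤ y ^ 2 := by
      calc d ^ 2 ≤ |y| ^ 2 := by nlinarith
        _ = y ^ 2 := sq_abs y
    have hexp : Real.exp (-(x ^ 2 - 2 * ρ * x * y + y ^ 2) / (2 * (1 - ρ ^ 2))) ≤
        Real.exp (-d ^ 2 / (1 + ρ)) := by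
      apply Real.exp_le_exp.mpr
      rw [div_le_div_iff₀ (by nlinarith) (by nlinarith)]
      have key : 2 * (1 - ρ) * d ^ 2 ≤ x ^ 2 - 2 * ρ * x * y + y ^ 2 := by
        nlinarith [mul_nonneg hρ0 (sq_nonneg (x - y)),
          mul_nonneg (by linarith : (0:ℝ) ≤ 1 - ρ) (by linarith : (0:ℝ) ≤ x ^ 2 + y ^ 2 - 2 * d ^ 2)]
      nlinarith [mul_le_mul_of_nonneg_left key (by linarith : (0:ℝ) ≤ 1 + ρ)]
    rw [norm_mul, norm_inv, Real.norm_eq_abs, Real.norm_eq_abs,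
      abs_of_pos hc, abs_of_pos (Real.exp_pos _)]
    exact mul_le_mul_of_nonneg_left hexp (by positivity)
  have hmeas : AEStronglyMeasurable (fun p : ℝ × ℝ => (2 * π * Real.sqrt (1 - ρ ^ 2))⁻¹ *
      Real.exp (-(p.1 ^ 2 - 2 * ρ * p.1 * p.2 + p.2 ^ 2) / (2 * (1 - ρ ^ 2))))
      (volume.restrict T) := by
    apply Continuous.aestronglyMeasurable
    fun_prop
  have key := norm_setIntegral_le_of_norm_le_const hvolTlt hbound
  calc (∫ p in T, (2 * π * Real.sqrt (1 - ρ ^ 2))⁻¹ *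
          Real.exp (-(p.1 ^ 2 - 2 * ρ * p.1 * p.2 + p.2 ^ 2) / (2 * (1 - ρ ^ 2))))
      ≤ ‖∫ p in T, (2 * π * Real.sqrt (1 - ρ ^ 2))⁻¹ *
          Real.exp (-(p.1 ^ 2 - 2 * ρ * p.1 * p.2 + p.2 ^ 2) / (2 * (1 - ρ ^ 2)))‖ :=
        le_abs_self _
    _ ≤ C * (volume T).toReal := key
    _ = (volume S).toReal ^ 2 / (2 * π * Real.sqrt (1 - ρ ^ 2)) *
        Real.exp (-d ^ 2 / (1 + ρ)) := by
        rw [hvolT, ENNReal.toReal_mul, hC]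
        ring
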